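/- Let H ⊆ ℝ be a bounded, countably infinite set with liminf H < limsup H. Then there exists an injective sequence (d_n) with {d_n : n ∈ ℕ} = H such that lim_{n→∞} (d_1 + ⋯ + d_n)/n does not exist. -/

import Mathlib

open Filter Topology

/-- The set of accumulation points of `H`. -/
def accPts (H : Set ℝ) : Set ℝ := {x | AccPt x (𝓟 H)}

/-- An accumulation point inside an open interval has infinitely many points of `H`
in that interval. -/
lemma accPt_inter_Ioo_infinite {H : Set ℝ} {x a b : ℝ} (h : AccPt x (𝓟 H))
    (hx : x ∈ Set.Ioo a b) : (H ∩ Set.Ioo a b).Infinite := by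
  by_contra hf
  rw [Set.not_infinite] at hf
  have hFfin : ((H ∩ Set.Ioo a b) \ {x}).Finite := hf.diff
  have hU : (Set.Ioo a b \ ((H ∩ Set.Ioo a b) \ {x})) ∈ 𝓝 x := by
    apply IsOpen.mem_nhds (isOpen_Ioo.sdiff hFfin.isClosed)
    exact ⟨hx, by simp⟩
  obtain ⟨y, ⟨hyU, hyH⟩, hyx⟩ := accPt_iff_nhds.1 h _ hU
  exact hyU.2 ⟨⟨hyH, hyU.1⟩, hyx⟩

open Classical in
/-- Pick an element of `S` not in `L` (when possible). -/
noncomputable def pickElt (S : Set ℝ) (L : List ℝ) : ℝ :=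
  if h : (S \ {z | z ∈ L}).Nonempty then h.choose else 0

lemma pickElt_spec {S : Set ℝ} (hS : S.Infinite) (L : List ℝ) :
    pickElt S L ∈ S ∧ pickElt S L ∉ L := by
  have h : (S \ {z | z ∈ L}).Nonempty := (hS.diff L.finite_toSet).nonempty
  unfold pickElt
  rw [dif_pos h]
  exact ⟨h.choose_spec.1, h.choose_spec.2⟩

/-- Append `N` fresh elements of `S` to `L`. -/
noncomputable def pump (S : Set ℝ) : ℕ → List ℝ → List ℝ
  | 0, L => L
  | (N + 1), L => pump S N (L ++ [pickElt S L])

lemma pump_length (S : Set ℝ) : ∀ (N : ℕ) (L : List ℝ),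
    (pump S N L).length = L.length + N := by
  intro N
  induction N with
  | zero => intro L; simp [pump]
  | succ N ih => intro L; rw [pump, ih]; simp; omega

lemma pump_prefix (S : Set ℝ) : ∀ (N : ℕ) (L : List ℝ), L <+: pump S N L := by
  intro N
  induction N with
  | zero => intro L; simp [pump]
  | succ N ih => intro L; exact (L.prefix_append [pickElt S L]).trans (ih _)

lemma pump_mem {S : Set ℝ} (hS : S.Infinite) : ∀ (N : ℕ) (L : List ℝ) (z : ℝ),
    z ∈ pump S N L → z ∈ L ∨ z ∈ S := by
  intro N
  induction N with
  | zero => intro L z hz; exact Or.inl hz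
  | succ N ih =>
    intro L z hz
    rcases ih _ _ hz with h | h
    · rcases List.mem_append.1 h with h | h
      · exact Or.inl h
      · simp at h; subst h; exact Or.inr (pickElt_spec hS L).1
    · exact Or.inr h

lemma pump_nodup {S : Set ℝ} (hS : S.Infinite) : ∀ (N : ℕ) (L : List ℝ),
    L.Nodup → (pump S N L).Nodup := by
  intro N
  induction N with
  | zero => intro L h; exact h
  | succ N ih =>
    intro L h
    apply ih
    simp [List.nodup_append, h, (pickElt_spec hS L).2]
    rintro a ha rfl; exact (pickElt_spec hS L).2 ha

lemma pump_sum_le {S : Set ℝ} (hS : S.Infinite) {u : ℝ} (hu : ∀ z ∈ S, z ≤ u) :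
    ∀ (N : ℕ) (L : List ℝ), (pump S N L).sum ≤ L.sum + N * u := by
  intro N
  induction N with
  | zero => intro L; simp [pump]
  | succ N ih =>
    intro L
    rw [pump]
    calc (pump S N (L ++ [pickElt S L])).sum ≤ (L ++ [pickElt S L]).sum + N * u := ih _
      _ = L.sum + pickElt S L + N * u := by simp
      _ ≤ L.sum + u + N * u := by
          have := hu _ (pickElt_spec hS L).1; linarith
      _ = L.sum + (N + 1 : ℕ) * u := by push_cast; ring

lemma pump_sum_ge {S : Set ℝ} (hS : S.Infinite) {u : ℝ} (hu : ∀ z ∈ S, u ≤ z) :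
    ∀ (N : ℕ) (L : List ℝ), L.sum + N * u ≤ (pump S N L).sum := by
  intro N
  induction N with
  | zero => intro L; simp [pump]
  | succ N ih =>
    intro L
    rw [pump]
    have h1 := ih (L ++ [pickElt S L])
    have h2 := hu _ (pickElt_spec hS L).1
    have h3 : (L ++ [pickElt S L]).sum = L.sum + pickElt S L := by simp
    have h4 : ((N + 1 : ℕ) : ℝ) * u = (N : ℝ) * u + u := by push_cast; ring
    rw [h3] at h1
    linarith

/-- One step of the construction. -/
noncomputable def nextList (A B : Set ℝ) (e : ℕ → ℝ) (Nf : ℕ → ℕ) (k : ℕ) (L : List ℝ) :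
    List ℝ :=
  pump (if k % 2 = 0 then A else B)
    (Nf (if e k ∈ L then L else L ++ [e k]).length)
    (if e k ∈ L then L else L ++ [e k])

/-- The increasing sequence of lists of the construction. -/
noncomputable def buildList (A B : Set ℝ) (e : ℕ → ℝ) (Nf : ℕ → ℕ) : ℕ → List ℝ
  | 0 => []
  | (k + 1) => nextList A B e Nf k (buildList A B e Nf k)

lemma list_sum_getD (L : List ℝ) : ∑ i ∈ Finset.range L.length, L.getD i 0 = L.sum := by
  induction L with
  | nil => simp
  | cons a t ih =>
    rw [List.length_cons, Finset.sum_range_succ']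
    simp only [List.getD_cons_succ, List.getD_cons_zero, ih, List.sum_cons]
    ring

lemma list_abs_sum_le {M : ℝ} : ∀ L : List ℝ, (∀ z ∈ L, |z| ≤ M) →
    |L.sum| ≤ L.length * M := by
  intro L
  induction L with
  | nil => simp
  | cons a t ih =>
    intro h
    have h1 : |a| ≤ M := h a (by simp)
    have h2 : |t.sum| ≤ t.length * M := ih fun z hz => h z (by simp [hz])
    calc |(a :: t).sum| = |a + t.sum| := by simp
      _ ≤ |a| + |t.sum| := abs_add_le _ _
      _ ≤ M + t.length * M := by linarith
      _ = (a :: t).length * M := by simp; push_cast; ring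

/-- a bounded countably infinite set with `liminf H < limsup H`
can be enumerated so that the Cesàro means do not converge. -/
theorem exists_enumeration_cesaro_not_convergent (H : Set ℝ)
    (hbd : Bornology.IsBounded H) (hc : H.Countable) (hi : H.Infinite)
    (hlim : sInf (accPts H) < sSup (accPts H)) :
    ∃ d : ℕ → ℝ, Function.Injective d ∧ Set.range d = H ∧
      ¬ ∃ l : ℝ, Tendsto (fun n => (∑ i ∈ Finset.range n, d i) / (n : ℝ)) atTop (𝓝 l) := by
  classical
  -- A bound for H
  obtain ⟨C, hC⟩ : ∃ C, ∀ z ∈ H, |z| ≤ C := by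
    obtain ⟨C, hC⟩ := isBounded_iff_forall_norm_le.1 hbd
    exact ⟨C, fun z hz => by simpa using hC z hz⟩
  -- accumulation points are bounded
  have hsub : accPts H ⊆ closure H := fun z hz => mem_closure_iff_clusterPt.2 hz.clusterPt
  have hSbd : Bornology.IsBounded (accPts H) := hbd.closure.subset hsub
  have hne : (accPts H).Nonempty := by
    by_contra h
    rw [Set.not_nonempty_iff_eq_empty] at h
    rw [h, Real.sInf_empty, Real.sSup_empty] at hlim
    exact lt_irrefl 0 hlim
  -- two distinct accumulation points
  obtain ⟨x, hxS, hxt⟩ := (csInf_lt_iff hSbd.bddBelow hne).1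
    (show sInf (accPts H) < (sInf (accPts H) + sSup (accPts H)) / 2 by linarith)
  obtain ⟨y, hyS, hty⟩ := (lt_csSup_iff hSbd.bddAbove hne).1
    (show (sInf (accPts H) + sSup (accPts H)) / 2 < sSup (accPts H) by linarith)
  have hxy : x < y := lt_trans hxt hty
  set ε : ℝ := (y - x) / 8 with hεdef
  have hε : 0 < ε := by simp only [hεdef]; linarith
  set c1 : ℝ := x + 2 * ε with hc1def
  set c2 : ℝ := y - 2 * ε with hc2def
  have hc12 : c1 < c2 := by simp only [hc1def, hc2def, hεdef]; linarith
  -- the two infinite reservoirs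
  set A : Set ℝ := H ∩ Set.Ioo (x - ε) (x + ε) with hAdef
  set B : Set ℝ := H ∩ Set.Ioo (y - ε) (y + ε) with hBdef
  have hA : A.Infinite := accPt_inter_Ioo_infinite hxS ⟨by linarith, by linarith⟩
  have hB : B.Infinite := accPt_inter_Ioo_infinite hyS ⟨by linarith, by linarith⟩
  have hAH : A ⊆ H := Set.inter_subset_left
  have hBH : B ⊆ H := Set.inter_subset_left
  have hAub : ∀ z ∈ A, z ≤ c1 - ε := by
    intro z hz; have := hz.2.2; simp only [hc1def]; linarith
  have hBlb : ∀ z ∈ B, c2 + ε ≤ z := by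
    intro z hz; have := hz.2.1; simp only [hc2def]; linarith
  -- global bound
  set M : ℝ := max C (max |c1| |c2|) with hMdef
  have hMH : ∀ z ∈ H, |z| ≤ M := fun z hz => (hC z hz).trans (le_max_left _ _)
  have hMc1 : |c1| ≤ M := ((le_max_left _ _).trans (le_max_right _ _))
  have hMc2 : |c2| ≤ M := ((le_max_right _ _).trans (le_max_right _ _))
  have hM0 : 0 ≤ M := (abs_nonneg c1).trans hMc1
  -- enumeration of H
  have hcs := hc.to_subtype
  have his := hi.to_subtype
  obtain ⟨φ⟩ : Nonempty (ℕ ≃ ↥H) := nonempty_equiv_of_countable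
  set e : ℕ → ℝ := fun n => (φ n : ℝ) with hedef
  have he_inj : Function.Injective e := by
    intro a b hab
    exact φ.injective (Subtype.ext hab)
  have he_mem : ∀ n, e n ∈ H := fun n => (φ n).2
  have he_surj : ∀ z ∈ H, ∃ n, e n = z := by
    intro z hz
    exact ⟨φ.symm ⟨z, hz⟩, by simp [hedef]⟩
  -- the block sizes
  set Nf : ℕ → ℕ := fun n => ⌈(2 * (n : ℝ) * M) / ε⌉₊ + 1 with hNfdef
  have hNf1 : ∀ n, 1 ≤ Nf n := fun n => Nat.le_add_left 1 _
  have hNfkey : ∀ n : ℕ, 2 * (n : ℝ) * M < (Nf n : ℝ) * ε := by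
    intro n
    have h1 : (2 * (n : ℝ) * M) / ε ≤ (⌈(2 * (n : ℝ) * M) / ε⌉₊ : ℝ) := Nat.le_ceil _
    have h2 : ((⌈(2 * (n : ℝ) * M) / ε⌉₊ : ℕ) : ℝ) < (Nf n : ℝ) := by
      simp only [hNfdef]; push_cast; linarith
    have h3 : (2 * (n : ℝ) * M) / ε < (Nf n : ℝ) := lt_of_le_of_lt h1 h2
    calc 2 * (n : ℝ) * M = (2 * (n : ℝ) * M) / ε * ε := by field_simp
      _ < (Nf n : ℝ) * ε := by exact mul_lt_mul_of_pos_right h3 hε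
  -- the construction
  set F : ℕ → List ℝ := buildList A B e Nf with hFdef
  -- basic step facts
  have hstep : ∀ k, F (k + 1) = nextList A B e Nf k (F k) := fun k => rfl
  have hLmid : ∀ k, ∀ z ∈ (if e k ∈ F k then F k else F k ++ [e k]), z ∈ F k ∨ z = e k := by
    intro k z hz
    split at hz
    · exact Or.inl hz
    · rcases List.mem_append.1 hz with h | h
      · exact Or.inl h
      · simp at h; exact Or.inr h
  -- membership invariant
  have hmemH : ∀ k, ∀ z ∈ F k, z ∈ H := by
    intro k
    induction k with
    | zero => intro z hz; simp [hFdef, buildList] at hz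
    | succ k ih =>
      intro z hz
      rw [hstep] at hz
      unfold nextList at hz
      rcases pump_mem (by split <;> [exact hA; exact hB]) _ _ _ hz with h | h
      · rcases hLmid k z h with h | h
        · exact ih z h
        · rw [h]; exact he_mem k
      · split at h
        · exact hAH h
        · exact hBH h
  -- nodup invariant
  have hnodup : ∀ k, (F k).Nodup := by
    intro k
    induction k with
    | zero => simp [hFdef, buildList]
    | succ k ih =>
      rw [hstep]
      unfold nextList
      apply pump_nodup (by split <;> [exact hA; exact hB])
      split
      · exact ih
      · next h => simp [List.nodup_append, ih, h]; rintro a ha rfl; exact h ha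
  -- prefix invariant
  have hpre : ∀ k, F k <+: F (k + 1) := by
    intro k
    rw [hstep]
    unfold nextList
    refine List.IsPrefix.trans ?_ (pump_prefix _ _ _)
    split
    · exact List.prefix_refl _
    · exact List.prefix_append _ _
  have hchain : ∀ j k, j ≤ k → F j <+: F k := by
    intro j k hjk
    induction k with
    | zero => rw [Nat.le_zero.1 hjk]
    | succ k ih =>
      rcases Nat.lt_or_ge j (k + 1) with h | h
      · exact (ih (Nat.lt_succ_iff.1 h)).trans (hpre k)
      · rw [le_antisymm hjk h]
  -- length grows
  have hlen_succ : ∀ k, (F k).length + 1 ≤ (F (k + 1)).length := by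
    intro k
    rw [hstep]
    unfold nextList
    rw [pump_length]
    have h1 : (F k).length ≤ (if e k ∈ F k then F k else F k ++ [e k]).length := by
      split <;> simp
    have := hNf1 ((if e k ∈ F k then F k else F k ++ [e k]).length)
    omega
  have hlen : ∀ k, k ≤ (F k).length := by
    intro k
    induction k with
    | zero => simp
    | succ k ih => have := hlen_succ k; omega
  -- e k appears
  have he_in : ∀ k, e k ∈ F (k + 1) := by
    intro k
    rw [hstep]
    unfold nextList
    apply (pump_prefix _ _ _).subset
    split
    · next h => exact h
    · simp
  -- abs sum bound
  have habs : ∀ k, |(F k).sum| ≤ (F k).length * M := by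
    intro k
    exact list_abs_sum_le _ (fun z hz => hMH z (hmemH k z hz))
  -- the average bounds
  have havg : ∀ k, (k % 2 = 0 → (F (k + 1)).sum < c1 * (F (k + 1)).length) ∧
      (k % 2 ≠ 0 → c2 * (F (k + 1)).length < (F (k + 1)).sum) := by
    intro k
    set L' : List ℝ := if e k ∈ F k then F k else F k ++ [e k] with hL'def
    have hL'H : ∀ z ∈ L', z ∈ H := by
      intro z hz
      rcases hLmid k z hz with h | h
      · exact hmemH k z h
      · rw [h]; exact he_mem k
    have hL'abs : |L'.sum| ≤ L'.length * M := list_abs_sum_le _ (fun z hz => hMH z (hL'H z hz))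
    set n' : ℕ := L'.length with hn'def
    set N : ℕ := Nf n' with hNdef
    have hkey : 2 * (n' : ℝ) * M < (N : ℝ) * ε := hNfkey n'
    constructor
    · intro hke
      have hF : F (k + 1) = pump A N L' := by
        rw [hstep]; unfold nextList; rw [if_pos hke]
      rw [hF, pump_length]
      have hsum : (pump A N L').sum ≤ L'.sum + N * (c1 - ε) := pump_sum_le hA hAub N L'
      have h1 : L'.sum ≤ (n' : ℝ) * M := le_trans (le_abs_self _) hL'abs
      have h2 : -((n' : ℝ) * M) ≤ c1 * n' := by
        have : -M ≤ c1 := neg_le_of_abs_le hMc1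
        nlinarith [Nat.cast_nonneg (α := ℝ) n']
      have hcast : ((L'.length + N : ℕ) : ℝ) = (n' : ℝ) + (N : ℝ) := by
        rw [hn'def]; push_cast; ring
      rw [hcast]
      have hexp : (N : ℝ) * (c1 - ε) = c1 * N - N * ε := by ring
      have hexp2 : c1 * ((n' : ℝ) + N) = c1 * n' + c1 * N := by ring
      linarith
    · intro hko
      have hF : F (k + 1) = pump B N L' := by
        rw [hstep]; unfold nextList; rw [if_neg hko]
      rw [hF, pump_length]
      have hsum : L'.sum + N * (c2 + ε) ≤ (pump B N L').sum := pump_sum_ge hB hBlb N L'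
      have h1 : -((n' : ℝ) * M) ≤ L'.sum := neg_le_of_abs_le hL'abs
      have h2 : c2 * n' ≤ (n' : ℝ) * M := by
        have : c2 ≤ M := le_trans (le_abs_self _) hMc2
        nlinarith [Nat.cast_nonneg (α := ℝ) n']
      have hcast : ((L'.length + N : ℕ) : ℝ) = (n' : ℝ) + (N : ℝ) := by
        rw [hn'def]; push_cast; ring
      rw [hcast]
      have hexp : (N : ℝ) * (c2 + ε) = c2 * N + N * ε := by ring
      have hexp2 : c2 * ((n' : ℝ) + N) = c2 * n' + c2 * N := by ring
      linarith
  -- the sequence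
  set d : ℕ → ℝ := fun n => (F (n + 1)).getD n 0 with hddef
  have hd_lt : ∀ n, n < (F (n + 1)).length := fun n => lt_of_lt_of_le (Nat.lt_succ_self n) (hlen (n + 1))
  have hd_entry : ∀ n m, (hm : n < (F m).length) → d n = (F m)[n] := by
    intro n m hm
    rcases le_total (n + 1) m with h | h
    · have hp := hchain _ _ h
      rw [hddef]
      simp only
      rw [List.getD_eq_getElem _ _ (hd_lt n), hp.getElem (hd_lt n)]
    · have hp := hchain _ _ h
      rw [hddef]
      simp only
      rw [List.getD_eq_getElem _ _ (hd_lt n)]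
      exact (hp.getElem hm).symm
  refine ⟨d, ?_, ?_, ?_⟩
  · -- injectivity
    intro n m hnm
    by_contra hne'
    set K : ℕ := max n m + 1 with hKdef
    have hnK : n < (F K).length := lt_of_lt_of_le (by omega) (hlen K)
    have hmK : m < (F K).length := lt_of_lt_of_le (by omega) (hlen K)
    rw [hd_entry n K hnK, hd_entry m K hmK] at hnm
    exact hne' (((hnodup K).getElem_inj_iff).1 hnm)
  · -- range
    ext z
    constructor
    · rintro ⟨n, rfl⟩
      rw [hd_entry n (n + 1) (hd_lt n)]
      exact hmemH _ _ (List.getElem_mem _)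
    · intro hz
      obtain ⟨j, hj⟩ := he_surj z hz
      have hmem : z ∈ F (j + 1) := hj ▸ he_in j
      obtain ⟨i, hi, hiz⟩ := List.mem_iff_getElem.1 hmem
      exact ⟨i, by rw [hd_entry i (j + 1) hi]; exact hiz⟩
  · -- no Cesàro limit
    rintro ⟨l, hl⟩
    set g : ℕ → ℝ := fun n => (∑ i ∈ Finset.range n, d i) / (n : ℝ) with hgdef
    have hsum_eq : ∀ k, ∑ i ∈ Finset.range (F (k + 1)).length, d i = (F (k + 1)).sum := by
      intro k
      rw [← list_sum_getD (F (k + 1))]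
      apply Finset.sum_congr rfl
      intro i hi
      rw [Finset.mem_range] at hi
      rw [hd_entry i (k + 1) hi, List.getD_eq_getElem _ _ hi]
    have hlenpos : ∀ k, (0 : ℝ) < (F (k + 1)).length := by
      intro k
      have h := hlen (k + 1)
      exact_mod_cast (by omega : 0 < (F (k + 1)).length)
    have hg_even : ∀ k, k % 2 = 0 → g (F (k + 1)).length < c1 := by
      intro k hk
      rw [hgdef]
      simp only
      rw [hsum_eq k, div_lt_iff₀ (hlenpos k)]
      exact (havg k).1 hk
    have hg_odd : ∀ k, k % 2 ≠ 0 → c2 < g (F (k + 1)).length := by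
      intro k hk
      rw [hgdef]
      simp only
      rw [hsum_eq k, lt_div_iff₀ (hlenpos k)]
      exact (havg k).2 hk
    have hmono_len : ∀ k, k ≤ (F (k + 1)).length := fun k => le_trans (Nat.le_succ k) (hlen (k + 1))
    have htend : ∀ (c : ℕ → ℕ), (∀ m, m ≤ c m) →
        Tendsto (fun m => g (F (c m + 1)).length) atTop (𝓝 l) := by
      intro c hcm
      apply hl.comp
      apply tendsto_atTop_mono (fun m => le_trans (hcm m) (hmono_len (c m)))
      exact tendsto_id
    have h1 : l ≤ c1 := by
      apply le_of_tendsto (htend (fun m => 2 * m) (fun m => by show m ≤ 2 * m; omega))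
      exact Eventually.of_forall fun m => (hg_even (2 * m) (by omega)).le
    have h2 : c2 ≤ l := by
      apply ge_of_tendsto (htend (fun m => 2 * m + 1) (fun m => by show m ≤ 2 * m + 1; omega))
      exact Eventually.of_forall fun m => (hg_odd (2 * m + 1) (by omega)).le
    linarith
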